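/- (The optimal value of the spectral relaxation is an attained generalized eigenvalue.) Let A, B be symmetric real d×d matrices with B positive definite, and set γ* := sSup {γ ∈ ℝ : (A − γ·B).PosSemidef}. Then this set is nonempty, bounded above, and equals the interval (−∞, γ*]; in particular A − γ*·B is positive semidefinite, and there exists a nonzero vector v ∈ ℝ^d with A.mulVec v = γ* • (B.mulVec v), i.e., γ* is a generalized eigenvalue of the pair (A, B). -/

import Mathlib

open Matrix

private lemma quad_continuous {d : ℕ} (M : Matrix (Fin d) (Fin d) ℝ) :
    Continuous fun x : Fin d → ℝ => x ⬝ᵥ M *ᵥ x :=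
  continuous_id.dotProduct (continuous_const.matrix_mulVec continuous_id)

private lemma quad_min {d : ℕ} (hd : 0 < d) (M : Matrix (Fin d) (Fin d) ℝ) :
    ∃ x0 : Fin d → ℝ, ‖x0‖ = 1 ∧ ∀ x : Fin d → ℝ, ‖x‖ = 1 →
      x0 ⬝ᵥ M *ᵥ x0 ≤ x ⬝ᵥ M *ᵥ x := by
  haveI : Nonempty (Fin d) := ⟨⟨0, hd⟩⟩
  have hne : (Metric.sphere (0 : Fin d → ℝ) 1).Nonempty :=
    NormedSpace.sphere_nonempty.2 zero_le_one
  obtain ⟨x0, hx0, hmin⟩ := (isCompact_sphere (0 : Fin d → ℝ) 1).exists_isMinOn hne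
    (quad_continuous M).continuousOn
  refine ⟨x0, by simpa using hx0, fun x hx => hmin (by simpa using hx)⟩

private lemma quad_expand {d : ℕ} (A B : Matrix (Fin d) (Fin d) ℝ) (γ : ℝ)
    (x : Fin d → ℝ) :
    x ⬝ᵥ (A - γ • B) *ᵥ x = x ⬝ᵥ A *ᵥ x - γ * (x ⬝ᵥ B *ᵥ x) := by
  simp [sub_mulVec, smul_mulVec, dotProduct_sub, dotProduct_smul]

private lemma psd_iff {d : ℕ} (M : Matrix (Fin d) (Fin d) ℝ) (hM : Mᵀ = M) :
    M.PosSemidef ↔ ∀ x : Fin d → ℝ, 0 ≤ x ⬝ᵥ M *ᵥ x := by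
  constructor
  · intro h x
    simpa using h.dotProduct_mulVec_nonneg x
  · intro h
    refine PosSemidef.of_dotProduct_mulVec_nonneg (by rwa [Matrix.IsHermitian, conjTranspose_eq_transpose_of_trivial]) fun x => ?_
    simpa using h x

private lemma psd_of_sphere {d : ℕ} (M : Matrix (Fin d) (Fin d) ℝ) (hM : Mᵀ = M)
    (h : ∀ x : Fin d → ℝ, ‖x‖ = 1 → 0 ≤ x ⬝ᵥ M *ᵥ x) : M.PosSemidef := by
  rw [psd_iff M hM]
  intro x
  rcases eq_or_ne x 0 with rfl | hx
  · simp
  · have hnx : (0 : ℝ) < ‖x‖ := norm_pos_iff.2 hx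
    set u : Fin d → ℝ := ‖x‖⁻¹ • x with hu
    have hun : ‖u‖ = 1 := by
      rw [hu, norm_smul]
      simp [abs_of_pos (inv_pos.2 hnx), inv_mul_cancel₀ hnx.ne']
    have hq : u ⬝ᵥ M *ᵥ u = ‖x‖⁻¹ * ‖x‖⁻¹ * (x ⬝ᵥ M *ᵥ x) := by
      rw [hu]
      simp [mulVec_smul, smul_dotProduct, dotProduct_smul, mul_assoc]
    have h0 := h u hun
    rw [hq] at h0
    have : 0 < ‖x‖⁻¹ * ‖x‖⁻¹ := by positivity
    nlinarith

/-- The optimal value of the spectral relaxation is an attained generalized eigenvalue: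
the feasible set `{γ : (A − γ·B).PosSemidef}` is nonempty, bounded above, equals
`(-∞, γ*]` for `γ* = sSup` of the set, `A − γ*·B` is PSD, and `γ*` is a generalized
eigenvalue of the pair `(A, B)`. -/
theorem gen_eig_attained {d : ℕ} (hd : 0 < d)
    (A B : Matrix (Fin d) (Fin d) ℝ) (hA : Aᵀ = A) (hB : B.PosDef) :
    {γ : ℝ | (A - γ • B).PosSemidef}.Nonempty ∧
    BddAbove {γ : ℝ | (A - γ • B).PosSemidef} ∧
    {γ : ℝ | (A - γ • B).PosSemidef} =
      Set.Iic (sSup {γ : ℝ | (A - γ • B).PosSemidef}) ∧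
    (A - sSup {γ : ℝ | (A - γ • B).PosSemidef} • B).PosSemidef ∧
    ∃ v : Fin d → ℝ, v ≠ 0 ∧
      A.mulVec v = sSup {γ : ℝ | (A - γ • B).PosSemidef} • B.mulVec v := by
  set S := {γ : ℝ | (A - γ • B).PosSemidef} with hS
  have hBsymm : Bᵀ = B := by
    have := hB.isHermitian
    rwa [Matrix.IsHermitian, conjTranspose_eq_transpose_of_trivial] at this
  have hsymm : ∀ γ : ℝ, (A - γ • B)ᵀ = A - γ • B := by
    intro γ
    rw [transpose_sub, transpose_smul, hA, hBsymm]
  have hBpos : ∀ x : Fin d → ℝ, x ≠ 0 → 0 < x ⬝ᵥ B *ᵥ x := by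
    intro x hx
    simpa using hB.dotProduct_mulVec_pos hx
  have hmemS : ∀ γ : ℝ, γ ∈ S ↔ ∀ x : Fin d → ℝ, 0 ≤ x ⬝ᵥ A *ᵥ x - γ * (x ⬝ᵥ B *ᵥ x) := by
    intro γ
    rw [hS, Set.mem_setOf_eq, psd_iff _ (hsymm γ)]
    simp_rw [quad_expand]
  -- Nonempty
  obtain ⟨xa, hxa, hxamin⟩ := quad_min hd A
  obtain ⟨xb, hxb, hxbmin⟩ := quad_min hd B
  have hxb0 : xb ≠ 0 := fun h => by simp [h] at hxb
  set c : ℝ := xb ⬝ᵥ B *ᵥ xb with hc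
  have hcpos : 0 < c := hBpos xb hxb0
  set m : ℝ := xa ⬝ᵥ A *ᵥ xa with hm
  set γ₀ : ℝ := min 0 (m / c) with hγ₀
  have hγ₀mem : γ₀ ∈ S := by
    rw [hS, Set.mem_setOf_eq]
    apply psd_of_sphere _ (hsymm γ₀)
    intro x hx
    rw [quad_expand]
    have h1 : m ≤ x ⬝ᵥ A *ᵥ x := hxamin x hx
    have h2 : c ≤ x ⬝ᵥ B *ᵥ x := hxbmin x hx
    have hγ0 : γ₀ ≤ 0 := min_le_left _ _
    have hγm : γ₀ ≤ m / c := min_le_right _ _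
    have h3 : γ₀ * (x ⬝ᵥ B *ᵥ x) ≤ γ₀ * c := mul_le_mul_of_nonpos_left h2 hγ0
    have h4 : γ₀ * c ≤ (m / c) * c := mul_le_mul_of_nonneg_right hγm hcpos.le
    have h5 : (m / c) * c = m := div_mul_cancel₀ m hcpos.ne'
    linarith
  have hSne : S.Nonempty := ⟨γ₀, hγ₀mem⟩
  -- Bounded above
  have hxb2 : 0 < xb ⬝ᵥ B *ᵥ xb := hcpos
  have hbdd : BddAbove S := by
    refine ⟨(xb ⬝ᵥ A *ᵥ xb) / c, fun γ hγ => ?_⟩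
    have := (hmemS γ).1 hγ xb
    rw [le_div_iff₀ hcpos]
    linarith
  -- downward closed
  have hdc : ∀ γ γ' : ℝ, γ' ≤ γ → γ ∈ S → γ' ∈ S := by
    intro γ γ' hle hγ
    rw [hmemS] at hγ ⊢
    intro x
    have := hγ x
    rcases eq_or_ne x 0 with rfl | hx
    · simp
    · have hbx := hBpos x hx
      nlinarith
  -- closed
  have hclosed : IsClosed S := by
    have : S = ⋂ x : Fin d → ℝ, {γ : ℝ | 0 ≤ x ⬝ᵥ A *ᵥ x - γ * (x ⬝ᵥ B *ᵥ x)} := by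
      ext γ
      simp only [Set.mem_iInter, Set.mem_setOf_eq]
      exact hmemS γ
    rw [this]
    exact isClosed_iInter fun x =>
      isClosed_le continuous_const (by fun_prop)
  have hsupmem : sSup S ∈ S := hclosed.csSup_mem hSne hbdd
  have hIic : S = Set.Iic (sSup S) := by
    ext γ
    constructor
    · intro hγ
      exact le_csSup hbdd hγ
    · intro hγ
      exact hdc (sSup S) γ hγ hsupmem
  refine ⟨hSne, hbdd, hIic, hsupmem, ?_⟩
  -- eigenvector
  set γs := sSup S with hγs
  set M : Matrix (Fin d) (Fin d) ℝ := A - γs • B with hMdef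
  have hMpsd : M.PosSemidef := hsupmem
  have hv : ∃ v : Fin d → ℝ, v ≠ 0 ∧ v ⬝ᵥ M *ᵥ v ≤ 0 := by
    by_contra h
    push_neg at h
    -- M is positive definite; find ε > 0 with γs + ε ∈ S
    obtain ⟨xm, hxm, hxmmin⟩ := quad_min hd M
    have hxm0 : xm ≠ 0 := fun hh => by simp [hh] at hxm
    set m' : ℝ := xm ⬝ᵥ M *ᵥ xm with hm'
    have hm'pos : 0 < m' := h xm hxm0
    -- max of B form on sphere
    obtain ⟨xB, hxB, hxBmax⟩ := quad_min hd (-B)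
    have hxB0 : xB ≠ 0 := fun hh => by simp [hh] at hxB
    set Cb : ℝ := xB ⬝ᵥ B *ᵥ xB with hCb
    have hCbpos : 0 < Cb := hBpos xB hxB0
    have hCbmax : ∀ x : Fin d → ℝ, ‖x‖ = 1 → x ⬝ᵥ B *ᵥ x ≤ Cb := by
      intro x hx
      have := hxBmax x hx
      simp only [neg_mulVec, dotProduct_neg] at this
      linarith
    set ε : ℝ := m' / Cb with hε
    have hεpos : 0 < ε := div_pos hm'pos hCbpos
    have hmem : γs + ε ∈ S := by
      rw [hS, Set.mem_setOf_eq]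
      apply psd_of_sphere _ (hsymm _)
      intro x hx
      rw [quad_expand]
      have hMx : x ⬝ᵥ M *ᵥ x = x ⬝ᵥ A *ᵥ x - γs * (x ⬝ᵥ B *ᵥ x) := quad_expand A B γs x
      have h1 : m' ≤ x ⬝ᵥ M *ᵥ x := hxmmin x hx
      have h2 : x ⬝ᵥ B *ᵥ x ≤ Cb := hCbmax x hx
      have h3 : ε * (x ⬝ᵥ B *ᵥ x) ≤ ε * Cb := mul_le_mul_of_nonneg_left h2 hεpos.le
      have h4 : ε * Cb = m' := div_mul_cancel₀ m' hCbpos.ne'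
      nlinarith
    have : γs + ε ≤ γs := le_csSup hbdd hmem
    linarith
  obtain ⟨v, hv0, hvle⟩ := hv
  have hvge : 0 ≤ v ⬝ᵥ M *ᵥ v := by simpa using hMpsd.dotProduct_mulVec_nonneg v
  have hveq : v ⬝ᵥ M *ᵥ v = 0 := le_antisymm hvle hvge
  have hMv : M *ᵥ v = 0 := by
    have := (hMpsd.dotProduct_mulVec_zero_iff v).1 (by simpa using hveq)
    exact this
  refine ⟨v, hv0, ?_⟩
  have : A *ᵥ v - γs • (B *ᵥ v) = 0 := by
    rw [hMdef] at hMv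
    rw [sub_mulVec, smul_mulVec] at hMv
    exact hMv
  rw [sub_eq_zero] at this
  exact this
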